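/- Let Sλ be a densely defined weighted shift on a directed tree T with weights λ, and E the spectral measure of |Sλ|. Then ⟨E(·)|Sλ|f, |Sλ|f⟩ is absolutely continuous with respect to ⟨E(·)Sλ f, Sλ f⟩ for every f ∈ dom(Sλ) if and only if for every u ∈ V with ‖Sλ e_u‖ ≠ 0 there exists v ∈ Chi(u) with λ_v ≠ 0 and ‖Sλ e_v‖ = ‖Sλ e_u‖. -/

import Mathlib

open ContinuousLinearMap MeasureTheory

local notation "⟪" x ", " y "⟫" => @inner ℂ _ _ x y

/-- A directed tree encoded by a parent function: `isRoot` singles out the root (if any),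
`par` assigns to each non-root vertex its parent (and fixes the root); the tree is acyclic
and connected. `V° = {v | ¬ isRoot v}` and `Chi u = {v ∈ V° | par v = u}`. -/
structure DirectedTree (V : Type*) : Type _ where
  isRoot : V → Prop
  par : V → V
  root_unique : ∀ u v, isRoot u → isRoot v → u = v
  par_root : ∀ v, isRoot v → par v = v
  par_ne_self : ∀ v, ¬ isRoot v → par v ≠ v
  acyclic : ∀ (v : V) (n : ℕ), 0 < n → par^[n] v = v → isRoot v
  connected : ∀ u v : V, ∃ m n : ℕ, par^[m] u = par^[n] v

open Classical in
/-- The formal weighted-shift action: `(Λ f)(v) = λ_v · f(par v)` for non-root `v`, `0` at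
the root. The weighted shift `S_λ` is the operator `f ↦ Λ f` on the domain
`{f ∈ ℓ²(V) | Λ f ∈ ℓ²(V)}`. -/
noncomputable def shiftFun {V : Type*} (T : DirectedTree V) (lam : V → ℂ) (f : V → ℂ) :
    V → ℂ :=
  fun v => if T.isRoot v then 0 else lam v * f (T.par v)

open Classical in
/-- The basis vector `e_u` of `ℓ²(V)` as a plain function. -/
noncomputable def eVec {V : Type*} (u : V) : V → ℂ := fun v => if v = u then 1 else 0

/-- `‖S_λ e_u‖`, given that `e_u` lies in the domain of `S_λ`. -/
noncomputable def swnorm {V : Type*} (T : DirectedTree V) (lam : V → ℂ)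
    (he : ∀ u : V, Memℓp (shiftFun T lam (eVec u)) 2) (u : V) : ℝ :=
  ‖(⟨shiftFun T lam (eVec u), he u⟩ : lp (fun _ : V => ℂ) 2)‖

/-- `E` is the spectral measure of the (possibly unbounded) self-adjoint diagonal operator on
`ℓ²(V)` with diagonal `d` (together with the scalar measures `μ f = ⟨E(·)f, f⟩`). -/
structure IsDiagSpectralMeasure {V : Type*} (d : V → ℝ)
    (E : Set ℝ → (lp (fun _ : V => ℂ) 2 →L[ℂ] lp (fun _ : V => ℂ) 2))
    (μ : lp (fun _ : V => ℂ) 2 → Measure ℝ) : Prop where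
  selfadj : ∀ σ : Set ℝ, MeasurableSet σ → ContinuousLinearMap.adjoint (E σ) = E σ
  inter : ∀ σ τ : Set ℝ, MeasurableSet σ → MeasurableSet τ → E σ ∘L E τ = E (σ ∩ τ)
  univ : E Set.univ = 1
  compat : ∀ f (σ : Set ℝ), MeasurableSet σ → (μ f σ).toReal = (⟪E σ f, f⟫).re
  domIff : ∀ f : lp (fun _ : V => ℂ) 2,
    Memℓp (fun v => (d v : ℂ) * f v) 2 ↔ Integrable (fun x => x ^ 2) (μ f)
  moment1 : ∀ (f : lp (fun _ : V => ℂ) 2) (hf : Memℓp (fun v => (d v : ℂ) * f v) 2),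
    (⟪(⟨fun v => (d v : ℂ) * f v, hf⟩ : lp (fun _ : V => ℂ) 2), f⟫).re = ∫ x, x ∂(μ f)
  moment2 : ∀ (f : lp (fun _ : V => ℂ) 2) (hf : Memℓp (fun v => (d v : ℂ) * f v) 2),
    ‖(⟨fun v => (d v : ℂ) * f v, hf⟩ : lp (fun _ : V => ℂ) 2)‖ ^ 2 = ∫ x, x ^ 2 ∂(μ f)

section WSauxSection
open Classical ENNReal
set_option maxHeartbeats 1000000

namespace WSaux
variable {V : Type*}

lemma rpow_two_eq (x : ℝ) : x ^ ((2:ENNReal)).toReal = x ^ 2 := by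
  rw [show ((2:ENNReal)).toReal = ((2:ℕ):ℝ) by norm_num, Real.rpow_natCast]

lemma summable_norm_sq (f : lp (fun _ : V => ℂ) 2) : Summable fun v => ‖f v‖ ^ 2 := by
  have := (lp.memℓp f).summable (by norm_num : 0 < ((2:ENNReal)).toReal)
  simpa [rpow_two_eq] using this

lemma memℓp_two_iff (f : V → ℂ) : Memℓp f 2 ↔ Summable fun v => ‖f v‖ ^ 2 := by
  rw [memℓp_gen_iff (by norm_num : 0 < ((2:ENNReal)).toReal)]
  simp [rpow_two_eq]

lemma inner_self_c (z : ℂ) : (⟪z, z⟫) = ((‖z‖^2 : ℝ) : ℂ) := by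
  simp [RCLike.inner_apply, RCLike.conj_mul]

lemma re_inner_self (z : ℂ) : RCLike.re (⟪z, z⟫) = ‖z‖^2 := by
  rw [inner_self_c]; norm_cast

lemma re_inner_mulreal (a : ℝ) (z : ℂ) : RCLike.re (⟪(a:ℂ) * z, z⟫) = a * ‖z‖^2 := by
  simp [RCLike.inner_apply, map_mul, Complex.conj_ofReal]
  rw [Complex.sq_norm, Complex.normSq_apply]
  ring

lemma normsq_mul_real (a : ℝ) (z : ℂ) : ‖(a:ℂ) * z‖^2 = a^2 * ‖z‖^2 := by
  rw [norm_mul, mul_pow, Complex.norm_real, Real.norm_eq_abs, sq_abs]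

lemma toReal_tsum_ofReal {r : V → ℝ} (hr : ∀ v, 0 ≤ r v) (hs : Summable r) :
    (∑' v, ENNReal.ofReal (r v)).toReal = ∑' v, r v := by
  rw [← ENNReal.ofReal_tsum_of_nonneg hr hs, ENNReal.toReal_ofReal (tsum_nonneg hr)]

noncomputable def indPre (s : Set V) (f : V → ℂ) : V → ℂ := fun v => if v ∈ s then f v else 0

lemma memℓp_indPre (s : Set V) (f : lp (fun _ : V => ℂ) 2) : Memℓp (indPre s ⇑f) 2 := by
  rw [memℓp_two_iff]
  refine Summable.of_nonneg_of_le (fun v => by positivity) (fun v => ?_) (summable_norm_sq f)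
  by_cases h : v ∈ s <;> simp [indPre, h]

noncomputable def indCLM (s : Set V) : lp (fun _ : V => ℂ) 2 →L[ℂ] lp (fun _ : V => ℂ) 2 :=
  LinearMap.mkContinuous
    { toFun := fun f => (⟨indPre s ⇑f, memℓp_indPre s f⟩ : lp (fun _ : V => ℂ) 2)
      map_add' := fun f g => by
        apply lp.ext; funext v
        simp only [indPre, lp.coeFn_add, Pi.add_apply]
        split_ifs <;> simp
      map_smul' := fun c f => by
        apply lp.ext; funext v
        simp only [indPre, lp.coeFn_smul, Pi.smul_apply, RingHom.id_apply, smul_eq_mul]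
        split_ifs <;> simp }
    1 (fun f => by
      simp only [LinearMap.coe_mk, AddHom.coe_mk, one_mul]
      have h2 : 0 < ((2:ENNReal)).toReal := by norm_num
      have hle : ‖(⟨indPre s ⇑f, memℓp_indPre s f⟩ : lp (fun _ : V => ℂ) 2)‖ ^ ((2:ENNReal)).toReal
          ≤ ‖f‖ ^ ((2:ENNReal)).toReal := by
        rw [lp.norm_rpow_eq_tsum h2, lp.norm_rpow_eq_tsum h2]
        refine ((memℓp_indPre s f).summable h2).tsum_le_tsum (fun v => ?_)
          ((lp.memℓp f).summable h2)
        by_cases h : v ∈ s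
        · simp [indPre, h]
        · simp only [indPre, h, if_false, norm_zero]
          rw [Real.zero_rpow (by norm_num)]
          positivity
      rw [rpow_two_eq, rpow_two_eq] at hle
      nlinarith [norm_nonneg (⟨indPre s ⇑f, memℓp_indPre s f⟩ : lp (fun _ : V => ℂ) 2),
        norm_nonneg f])

@[simp] lemma indCLM_apply (s : Set V) (f : lp (fun _ : V => ℂ) 2) (v : V) :
    (indCLM s f : V → ℂ) v = if v ∈ s then f v else 0 := rfl

lemma re_inner_indCLM (s : Set V) (f : lp (fun _ : V => ℂ) 2) :
    RCLike.re ⟪indCLM s f, f⟫ = ∑' v, if v ∈ s then ‖f v‖^2 else 0 := by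
  rw [lp.inner_eq_tsum, RCLike.re_tsum _ (lp.summable_inner _ f)]
  refine tsum_congr fun v => ?_
  by_cases h : v ∈ s
  · simp only [indCLM_apply, h, if_true]
    exact re_inner_self (f v)
  · simp [indCLM_apply, h]

noncomputable def muC (d : V → ℝ) (f : lp (fun _ : V => ℂ) 2) : Measure ℝ :=
  Measure.sum fun v => (ENNReal.ofReal (‖f v‖^2)) • Measure.dirac (d v)

lemma muC_apply (d : V → ℝ) (f : lp (fun _ : V => ℂ) 2) {σ : Set ℝ} (hσ : MeasurableSet σ) :
    muC d f σ = ∑' v, if d v ∈ σ then ENNReal.ofReal (‖f v‖^2) else 0 := by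
  rw [muC, Measure.sum_apply _ hσ]
  refine tsum_congr fun v => ?_
  rw [Measure.smul_apply, Measure.dirac_apply' _ hσ]
  by_cases h : d v ∈ σ <;> simp [Set.indicator, h]

lemma lintegralC (d : V → ℝ) (f : lp (fun _ : V => ℂ) 2) {g : ℝ → ENNReal}
    (hg : Measurable g) :
    ∫⁻ x, g x ∂(muC d f) = ∑' v, ENNReal.ofReal (‖f v‖^2) * g (d v) := by
  rw [muC, lintegral_sum_measure]
  refine tsum_congr fun v => ?_
  rw [lintegral_smul_measure, lintegral_dirac' _ hg, smul_eq_mul]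

end WSaux

namespace WSaux
variable {V : Type*}

lemma summable_iff_tsum_ofReal_lt_top {r : V → ℝ} (hr : ∀ v, 0 ≤ r v) :
    Summable r ↔ ∑' v, ENNReal.ofReal (r v) < ⊤ := by
  constructor
  · intro h; rw [← ENNReal.ofReal_tsum_of_nonneg hr h]; exact ENNReal.ofReal_lt_top
  · intro h
    exact (ENNReal.summable_toReal h.ne).congr fun v => ENNReal.toReal_ofReal (hr v)

theorem concrete_isDiag (d : V → ℝ) (hd : ∀ v, 0 ≤ d v) :
    IsDiagSpectralMeasure d (fun σ => indCLM {v | d v ∈ σ}) (muC d) where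
  selfadj σ hσ := by
    refine ((ContinuousLinearMap.eq_adjoint_iff _ _).mpr fun x y => ?_).symm
    rw [lp.inner_eq_tsum, lp.inner_eq_tsum]
    refine tsum_congr fun v => ?_
    by_cases h : d v ∈ σ <;> simp [indCLM_apply, h]
  inter σ τ hσ hτ := by
    refine ContinuousLinearMap.ext fun f => lp.ext (funext fun v => ?_)
    simp only [ContinuousLinearMap.comp_apply, indCLM_apply, Set.mem_setOf_eq, Set.mem_inter_iff]
    split_ifs <;> tauto
  univ := by
    refine ContinuousLinearMap.ext fun f => lp.ext (funext fun v => ?_)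
    simp [indCLM_apply]
  compat f σ hσ := by
    have h1 : (⟪indCLM {v | d v ∈ σ} f, f⟫).re = RCLike.re ⟪indCLM {v | d v ∈ σ} f, f⟫ := rfl
    rw [h1, re_inner_indCLM, muC_apply d f hσ]
    have he : ∀ v, (if d v ∈ σ then ENNReal.ofReal (‖f v‖^2) else 0)
        = ENNReal.ofReal (if d v ∈ σ then ‖f v‖^2 else 0) := by
      intro v; split_ifs <;> simp
    have hnn : ∀ v, (0:ℝ) ≤ (if d v ∈ σ then ‖f v‖^2 else 0) := fun v => by
      split_ifs <;> positivity
    have hsum : Summable fun v => if d v ∈ σ then ‖f v‖^2 else 0 :=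
      Summable.of_nonneg_of_le hnn
        (fun v => by split_ifs with h; exacts [le_rfl, by positivity]) (summable_norm_sq f)
    rw [tsum_congr he, toReal_tsum_ofReal hnn hsum]
    rfl
  domIff f := by
    have hmeas : Measurable fun x : ℝ => x ^ 2 := by measurability
    have hlin : ∫⁻ x, ‖x^2‖ₑ ∂(muC d f)
        = ∑' v, ENNReal.ofReal (‖((d v : ℝ) : ℂ) * f v‖^2) := by
      rw [lintegralC d f (by measurability)]
      refine tsum_congr fun v => ?_
      rw [show (‖(d v)^2‖ₑ) = ENNReal.ofReal ((d v)^2) by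
        rw [← ofReal_norm, Real.norm_eq_abs, abs_of_nonneg (sq_nonneg _)]]
      rw [← ENNReal.ofReal_mul (by positivity), normsq_mul_real, mul_comm]
    rw [memℓp_two_iff, summable_iff_tsum_ofReal_lt_top (fun v => by positivity)]
    constructor
    · intro h
      exact ⟨hmeas.aestronglyMeasurable, by rw [hasFiniteIntegral_def, hlin]; exact h⟩
    · intro h
      have := h.hasFiniteIntegral
      rw [hasFiniteIntegral_def, hlin] at this
      exact this
  moment1 f hf := by
    have hsum2 : Summable fun v => ‖((d v : ℝ) : ℂ) * f v‖ ^ 2 := (memℓp_two_iff _).mp hf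
    have hsum1 : Summable fun v => d v * ‖f v‖ ^ 2 := by
      refine Summable.of_nonneg_of_le (fun v => mul_nonneg (hd v) (by positivity))
        (fun v => ?_) (hsum2.add (summable_norm_sq f))
      rw [normsq_mul_real]
      nlinarith [sq_nonneg (d v - 1), sq_nonneg ‖f v‖, hd v, norm_nonneg (f v)]
    have hL : (⟪(⟨fun v => ((d v : ℝ) : ℂ) * f v, hf⟩ : lp (fun _ : V => ℂ) 2), f⟫).re
        = ∑' v, d v * ‖f v‖^2 := by
      rw [show (⟪(⟨fun v => ((d v : ℝ) : ℂ) * f v, hf⟩ : lp (fun _ : V => ℂ) 2), f⟫).re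
          = RCLike.re ⟪(⟨fun v => ((d v : ℝ) : ℂ) * f v, hf⟩ : lp (fun _ : V => ℂ) 2), f⟫ from
          rfl]
      rw [lp.inner_eq_tsum, RCLike.re_tsum _ (lp.summable_inner _ f)]
      exact tsum_congr fun v => re_inner_mulreal (d v) (f v)
    rw [hL]
    have hae : (0 : ℝ → ℝ) ≤ᶠ[ae (muC d f)] fun x => x := by
      have : ∀ᵐ x ∂(muC d f), 0 ≤ x := by
        rw [ae_iff]
        have hms : MeasurableSet {x : ℝ | ¬ 0 ≤ x} := by
          simpa [not_le] using measurableSet_lt measurable_id measurable_const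
        rw [muC_apply d f hms, ENNReal.tsum_eq_zero]
        intro v; simp [Set.mem_setOf_eq, hd v]
      exact this.mono fun x hx => by simpa using hx
    rw [integral_eq_lintegral_of_nonneg_ae hae measurable_id.aestronglyMeasurable]
    rw [lintegralC d f ENNReal.measurable_ofReal]
    have he : ∀ v, ENNReal.ofReal (‖f v‖^2) * ENNReal.ofReal (d v)
        = ENNReal.ofReal (d v * ‖f v‖^2) := by
      intro v
      rw [← ENNReal.ofReal_mul (by positivity), mul_comm]
    rw [tsum_congr he, toReal_tsum_ofReal (fun v => mul_nonneg (hd v) (by positivity)) hsum1]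
  moment2 f hf := by
    have hmeas2 : Measurable fun x : ℝ => x ^ 2 := measurable_id.pow_const 2
    have hsum2 : Summable fun v => ‖((d v : ℝ) : ℂ) * f v‖ ^ 2 := (memℓp_two_iff _).mp hf
    have h2 : (0:ℝ) < ((2:ENNReal)).toReal := by norm_num
    have hL := lp.norm_rpow_eq_tsum h2 (⟨fun v => ((d v : ℝ) : ℂ) * f v, hf⟩ :
      lp (fun _ : V => ℂ) 2)
    rw [rpow_two_eq] at hL
    rw [hL]
    rw [integral_eq_lintegral_of_nonneg_ae (Filter.Eventually.of_forall fun x => sq_nonneg x)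
      hmeas2.aestronglyMeasurable]
    rw [lintegralC d f hmeas2.ennreal_ofReal]
    have he : ∀ v, ENNReal.ofReal (‖f v‖ ^ 2) * ENNReal.ofReal ((d v) ^ 2)
        = ENNReal.ofReal (‖((d v : ℝ) : ℂ) * f v‖ ^ 2) := fun v => by
      rw [← ENNReal.ofReal_mul (by positivity), normsq_mul_real, mul_comm]
    rw [tsum_congr he, toReal_tsum_ofReal (fun v => by positivity) hsum2]
    exact tsum_congr fun v => rpow_two_eq _

end WSaux

namespace WSaux
section Abstract
variable {V : Type*} (d : V → ℝ)
variable {E : Set ℝ → (lp (fun _ : V => ℂ) 2 →L[ℂ] lp (fun _ : V => ℂ) 2)}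
variable {μ : lp (fun _ : V => ℂ) 2 → MeasureTheory.Measure ℝ}

lemma proj_re (h : IsDiagSpectralMeasure d E μ) {σ : Set ℝ} (hσ : MeasurableSet σ)
    (x : lp (fun _ : V => ℂ) 2) : ‖E σ x‖ ^ 2 = RCLike.re ⟪E σ x, x⟫ := by
  have h2 := h.inter σ σ hσ hσ
  rw [Set.inter_self] at h2
  have h1 : ⟪E σ x, E σ x⟫ = ⟪x, E σ x⟫ := by
    calc ⟪E σ x, E σ x⟫
        = ⟪x, (ContinuousLinearMap.adjoint (E σ)) ((E σ) x)⟫ :=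
          (ContinuousLinearMap.adjoint_inner_right (E σ) x ((E σ) x)).symm
      _ = ⟪x, (E σ) ((E σ) x)⟫ := by rw [h.selfadj σ hσ]
      _ = ⟪x, ((E σ) ∘L (E σ)) x⟫ := by rw [ContinuousLinearMap.comp_apply]
      _ = ⟪x, E σ x⟫ := by rw [h2]
  rw [← inner_self_eq_norm_sq (𝕜 := ℂ), h1, inner_re_symm]

lemma E_single (h : IsDiagSpectralMeasure d E μ) {σ : Set ℝ} (hσ : MeasurableSet σ) (u : V) :
    E σ (lp.single 2 u 1) = if d u ∈ σ then lp.single 2 u 1 else 0 := by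
  classical
  set e : lp (fun _ : V => ℂ) 2 := lp.single 2 u 1 with he
  set a := d u with ha
  have hne : ‖e‖ = 1 := by
    rw [he]
    have := lp.norm_single (by norm_num : (0:ENNReal) < 2) (E := fun _ : V => ℂ) u (1:ℂ)
    simpa using this
  have hcoe : (fun v => ((d v : ℝ) : ℂ) * e v) = ⇑(lp.single 2 u ((a : ℝ) : ℂ)) := by
    funext v
    by_cases hv : v = u
    · subst hv
      simp [he, lp.single_apply_self, ha]
    · simp [he, lp.single_apply_ne _ _ _ hv, Pi.single_apply, hv]
  have hmem : Memℓp (fun v => ((d v : ℝ) : ℂ) * e v) 2 := by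
    rw [hcoe]; exact lp.memℓp _
  have hDe : (⟨fun v => ((d v : ℝ) : ℂ) * e v, hmem⟩ : lp (fun _ : V => ℂ) 2)
      = lp.single 2 u ((a : ℝ) : ℂ) := lp.ext hcoe
  have hEuniv : E Set.univ e = e := by rw [h.univ]; rfl
  have hmass : (μ e Set.univ).toReal = 1 := by
    rw [h.compat e Set.univ MeasurableSet.univ, hEuniv]
    rw [← RCLike.re_to_complex, inner_self_eq_norm_sq, hne]
    norm_num
  have hmass1 : μ e Set.univ = 1 := by rwa [← ENNReal.toReal_eq_one_iff]
  haveI : MeasureTheory.IsFiniteMeasure (μ e) := ⟨by rw [hmass1]; exact ENNReal.one_lt_top⟩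
  have hm2 : ∫ x, x ^ 2 ∂(μ e) = a ^ 2 := by
    rw [← h.moment2 e hmem, hDe]
    have := lp.norm_single (by norm_num : (0:ENNReal) < 2)
      (E := fun _ : V => ℂ) u ((a : ℝ) : ℂ)
    rw [this, Complex.norm_real, Real.norm_eq_abs, sq_abs]
  have hm1 : ∫ x, x ∂(μ e) = a := by
    rw [← h.moment1 e hmem]
    rw [← RCLike.re_to_complex, hDe, lp.inner_single_left]
    simp [he, lp.single_apply_self, RCLike.inner_apply, Complex.conj_ofReal]
  have hint2 : MeasureTheory.Integrable (fun x => x ^ 2) (μ e) := (h.domIff e).mp hmem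
  have hint1 : MeasureTheory.Integrable (fun x : ℝ => x) (μ e) := by
    refine MeasureTheory.Integrable.mono'
      (hint2.add (MeasureTheory.integrable_const 1))
      measurable_id.aestronglyMeasurable ?_
    refine Filter.Eventually.of_forall fun x => ?_
    simp only [Real.norm_eq_abs, Pi.add_apply]
    nlinarith [sq_abs x, abs_nonneg x, sq_nonneg (|x| - 1)]
  have hexp : (fun x : ℝ => (x - a) ^ 2) = fun x => x ^ 2 - 2 * a * x + a ^ 2 :=
    funext fun x => by ring
  have hI0 : MeasureTheory.Integrable (fun x : ℝ => 2 * a * x) (μ e) := by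
    have := hint1.const_mul (2 * a)
    exact this
  have hI1 : MeasureTheory.Integrable (fun x : ℝ => x ^ 2 - 2 * a * x) (μ e) := hint2.sub hI0
  have hintv : MeasureTheory.Integrable (fun x : ℝ => (x - a) ^ 2) (μ e) := by
    rw [hexp]
    exact hI1.add (MeasureTheory.integrable_const _)
  have hvar : ∫ x, (x - a) ^ 2 ∂(μ e) = 0 := by
    rw [hexp]
    rw [MeasureTheory.integral_add hI1 (MeasureTheory.integrable_const _),
      MeasureTheory.integral_sub hint2 hI0, MeasureTheory.integral_const_mul, hm2, hm1,
      MeasureTheory.integral_const, MeasureTheory.measureReal_def, hmass]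
    simp only [smul_eq_mul, one_mul]
    ring
  have hae : ∀ᵐ x ∂(μ e), x = a := by
    have h0 := (MeasureTheory.integral_eq_zero_iff_of_nonneg
      (fun x => sq_nonneg (x - a)) hintv).mp hvar
    filter_upwards [h0] with x hx
    have hx' : (x - a) ^ 2 = 0 := hx
    nlinarith [sq_nonneg (x - a)]
  have hnull : μ e {a}ᶜ = 0 := by
    have h0 := hae
    rw [MeasureTheory.ae_iff] at h0
    have : {x : ℝ | ¬ x = a} = ({a}ᶜ : Set ℝ) := by ext x; simp
    rwa [this] at h0
  have hval : RCLike.re ⟪E σ e, e⟫ = if a ∈ σ then 1 else 0 := by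
    have hc := h.compat e σ hσ
    rw [← RCLike.re_to_complex] at hc
    rw [← hc]
    by_cases hmem' : a ∈ σ
    · have hσc : μ e σᶜ = 0 := by
        refine le_antisymm ?_ zero_le
        rw [← hnull]
        exact MeasureTheory.measure_mono fun x hx => by
          simp only [Set.mem_compl_iff, Set.mem_singleton_iff] at hx ⊢
          intro hxa; exact hx (hxa ▸ hmem')
      have hσ1 : μ e σ = 1 := by
        have hadd := MeasureTheory.measure_add_measure_compl (μ := μ e) hσ
        rw [hσc, add_zero, hmass1] at hadd
        exact hadd
      rw [if_pos hmem', hσ1]; simp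
    · have hσ0 : μ e σ = 0 := by
        refine le_antisymm ?_ zero_le
        rw [← hnull]
        exact MeasureTheory.measure_mono fun x hx => by
          simp only [Set.mem_compl_iff, Set.mem_singleton_iff]
          intro hxa; exact hmem' (hxa ▸ hx)
      rw [if_neg hmem', hσ0]; simp
  have hp := proj_re d h hσ e
  by_cases hmem' : a ∈ σ
  · rw [if_pos hmem']
    have h1 : ‖E σ e‖ ^ 2 = 1 := by rw [hp, hval, if_pos hmem']
    have hsub : ‖E σ e - e‖ ^ 2 = 0 := by
      rw [norm_sub_sq (𝕜 := ℂ), h1, hne, hval, if_pos hmem']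
      norm_num
    have := norm_eq_zero.mp (pow_eq_zero_iff two_ne_zero |>.mp hsub)
    rw [sub_eq_zero] at this
    exact this
  · rw [if_neg hmem']
    have h1 : ‖E σ e‖ ^ 2 = 0 := by rw [hp, hval, if_neg hmem']
    exact norm_eq_zero.mp (pow_eq_zero_iff two_ne_zero |>.mp h1)

lemma E_apply (h : IsDiagSpectralMeasure d E μ) {σ : Set ℝ} (hσ : MeasurableSet σ)
    (f : lp (fun _ : V => ℂ) 2) (w : V) :
    (E σ f : V → ℂ) w = if d w ∈ σ then f w else 0 := by
  classical
  have h1 : HasSum (fun v => lp.single 2 v (f v)) f :=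
    lp.hasSum_single ENNReal.ofNat_ne_top f
  have h2 : HasSum (fun v => E σ (lp.single 2 v (f v))) (E σ f) := (E σ).hasSum h1
  have h3 : ∀ v, E σ (lp.single 2 v (f v)) = if d v ∈ σ then lp.single 2 v (f v) else 0 := by
    intro v
    have hs : lp.single 2 v (f v)
        = f v • (lp.single 2 v (1 : ℂ) : lp (fun _ : V => ℂ) 2) := by
      rw [← lp.single_smul, smul_eq_mul, mul_one]
    rw [hs, ContinuousLinearMap.map_smul, E_single d h hσ v]
    by_cases hd' : d v ∈ σ
    · rw [if_pos hd', if_pos hd', ← hs]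
    · rw [if_neg hd', if_neg hd', smul_zero]
  have h4 : HasSum (fun v => ⟪(lp.single 2 w (1:ℂ) : lp (fun _ : V => ℂ) 2), E σ (lp.single 2 v (f v))⟫)
      ⟪(lp.single 2 w (1:ℂ) : lp (fun _ : V => ℂ) 2), E σ f⟫ := (innerSL ℂ ((lp.single 2 w (1:ℂ) : lp (fun _ : V => ℂ) 2))).hasSum h2
  have h5 : ⟪(lp.single 2 w (1:ℂ) : lp (fun _ : V => ℂ) 2), E σ f⟫ = (E σ f : V → ℂ) w := by
    rw [lp.inner_single_left]
    simp [RCLike.inner_apply]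
  have h6 : (fun v => ⟪(lp.single 2 w (1:ℂ) : lp (fun _ : V => ℂ) 2), E σ (lp.single 2 v (f v))⟫)
      = fun v => if v = w then (if d w ∈ σ then f w else 0) else 0 := by
    funext v
    rw [h3 v]
    by_cases hvw : v = w
    · subst hvw
      by_cases hd' : d v ∈ σ
      · rw [if_pos hd', if_pos rfl, if_pos hd', lp.inner_single_left]
        simp [lp.single_apply_self, RCLike.inner_apply]
      · rw [if_neg hd', if_pos rfl, if_neg hd']
        simp
    · rw [if_neg hvw]
      by_cases hd' : d v ∈ σ
      · rw [if_pos hd', lp.inner_single_left, lp.single_apply_ne 2 v _ (Ne.symm hvw)]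
        simp
      · rw [if_neg hd']
        simp
  rw [h6] at h4
  rw [← h5]
  exact h4.unique (hasSum_ite_eq w _)

lemma inner_E_eq_zero_iff (h : IsDiagSpectralMeasure d E μ) {σ : Set ℝ}
    (hσ : MeasurableSet σ) (f : lp (fun _ : V => ℂ) 2) :
    ⟪E σ f, f⟫ = 0 ↔ ∀ v, d v ∈ σ → f v = 0 := by
  classical
  have hnn : ∀ v, (0:ℝ) ≤ (if d v ∈ σ then ‖f v‖ ^ 2 else 0) := fun v => by
    split_ifs <;> positivity
  have hsum : Summable fun v => if d v ∈ σ then ‖f v‖ ^ 2 else 0 :=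
    Summable.of_nonneg_of_le hnn
      (fun v => by split_ifs with hh; exacts [le_rfl, by positivity]) (summable_norm_sq f)
  have hform : ⟪E σ f, f⟫ = ((∑' v, if d v ∈ σ then ‖f v‖ ^ 2 else 0 : ℝ) : ℂ) := by
    rw [lp.inner_eq_tsum, Complex.ofReal_tsum]
    refine tsum_congr fun v => ?_
    rw [E_apply d h hσ f v]
    by_cases hv : d v ∈ σ
    · rw [if_pos hv, if_pos hv]
      exact inner_self_c (f v)
    · rw [if_neg hv, if_neg hv]
      simp
  rw [hform]
  constructor
  · intro h0 v hv
    have h0' : (∑' v, if d v ∈ σ then ‖f v‖ ^ 2 else 0) = 0 := by exact_mod_cast h0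
    have hle := hsum.le_tsum v (fun j _ => hnn j)
    rw [h0', if_pos hv] at hle
    have : ‖f v‖ ^ 2 = 0 := le_antisymm hle (by positivity)
    exact norm_eq_zero.mp (pow_eq_zero_iff two_ne_zero |>.mp this)
  · intro hz
    have : ∀ v, (if d v ∈ σ then ‖f v‖ ^ 2 else 0) = 0 := fun v => by
      split_ifs with hv
      · rw [hz v hv]; simp
      · rfl
    rw [tsum_congr this, tsum_zero]
    simp

end Abstract
end WSaux

end WSauxSection

/-- For a densely defined weighted shift `S_λ` on a directed tree with `E` the spectral
measure of `|S_λ|`: `⟨E(·)|S_λ|f, |S_λ|f⟩ ≪ ⟨E(·)S_λ f, S_λ f⟩` for every `f` in the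
domain of `S_λ` iff for every `u` with `‖S_λ e_u‖ ≠ 0` there exists a child `v` of `u`
with `λ_v ≠ 0` and `‖S_λ e_v‖ = ‖S_λ e_u‖`. -/
theorem weighted_shift_absolutely_continuous_iff {V : Type*} (T : DirectedTree V)
    (lam : V → ℂ)
    (hdense : Dense {f : lp (fun _ : V => ℂ) 2 | Memℓp (shiftFun T lam (fun v => f v)) 2})
    (he : ∀ u : V, Memℓp (shiftFun T lam (eVec u)) 2) :
    (∀ (E : Set ℝ → (lp (fun _ : V => ℂ) 2 →L[ℂ] lp (fun _ : V => ℂ) 2))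
        (μ : lp (fun _ : V => ℂ) 2 → Measure ℝ),
      IsDiagSpectralMeasure (swnorm T lam he) E μ →
      ∀ (f : lp (fun _ : V => ℂ) 2) (hf : Memℓp (shiftFun T lam (fun v => f v)) 2)
        (hf' : Memℓp (fun v => ((swnorm T lam he v : ℝ) : ℂ) * f v) 2),
        ∀ (σ : Set ℝ), MeasurableSet σ →
          ⟪E σ (⟨shiftFun T lam (fun v => f v), hf⟩ : lp (fun _ : V => ℂ) 2),
            (⟨shiftFun T lam (fun v => f v), hf⟩ : lp (fun _ : V => ℂ) 2)⟫ = 0 →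
          ⟪E σ (⟨fun v => ((swnorm T lam he v : ℝ) : ℂ) * f v, hf'⟩ :
              lp (fun _ : V => ℂ) 2),
            (⟨fun v => ((swnorm T lam he v : ℝ) : ℂ) * f v, hf'⟩ :
              lp (fun _ : V => ℂ) 2)⟫ = 0) ↔
    (∀ u : V, swnorm T lam he u ≠ 0 →
      ∃ v : V, ¬ T.isRoot v ∧ T.par v = u ∧ lam v ≠ 0 ∧
        swnorm T lam he v = swnorm T lam he u) := by
  classical
  set d : V → ℝ := swnorm T lam he with hdd
  have hd : ∀ v, 0 ≤ d v := fun v => norm_nonneg _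
  constructor
  · -- forward direction
    intro hLHS u hu
    by_contra hno
    push_neg at hno
    -- concrete spectral measure
    have hstruct := WSaux.concrete_isDiag d hd
    set f : lp (fun _ : V => ℂ) 2 := lp.single 2 u 1 with hfdef
    have hfe : (fun v => (f : V → ℂ) v) = eVec u := by
      funext v
      by_cases hv : v = u
      · subst hv; simp [hfdef, lp.single_apply_self, eVec]
      · simp [hfdef, lp.single_apply_ne 2 u _ hv, eVec, hv]
    have hf : Memℓp (shiftFun T lam (fun v => (f : V → ℂ) v)) 2 := by
      rw [hfe]; exact he u
    have hcoe : (fun v => ((d v : ℝ) : ℂ) * (f : V → ℂ) v)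
        = ⇑(lp.single 2 u ((d u : ℝ) : ℂ)) := by
      funext v
      by_cases hv : v = u
      · subst hv; simp [hfdef, lp.single_apply_self]
      · simp [hfdef, lp.single_apply_ne 2 u _ hv, Pi.single_apply, hv]
    have hf' : Memℓp (fun v => ((d v : ℝ) : ℂ) * (f : V → ℂ) v) 2 := by
      rw [hcoe]; exact lp.memℓp _
    have hσ : MeasurableSet ({d u} : Set ℝ) := measurableSet_singleton _
    set g : lp (fun _ : V => ℂ) 2 :=
      (⟨shiftFun T lam (fun v => (f : V → ℂ) v), hf⟩ : lp (fun _ : V => ℂ) 2) with hgdef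
    have hg0 : ⟪(fun σ => WSaux.indCLM {v | d v ∈ σ}) ({d u} : Set ℝ) g, g⟫ = 0 := by
      refine (WSaux.inner_E_eq_zero_iff d hstruct hσ g).mpr fun v hv => ?_
      have hv' : d v = d u := hv
      show shiftFun T lam (fun v => (f : V → ℂ) v) v = 0
      rw [shiftFun]
      by_cases hroot : T.isRoot v
      · rw [if_pos hroot]
      · rw [if_neg hroot]
        by_cases hpar : T.par v = u
        · by_cases hlam : lam v = 0
          · rw [hlam, zero_mul]
          · exact absurd hv' (hno v hroot hpar hlam)
        · have hz : (f : V → ℂ) (T.par v) = 0 := lp.single_apply_ne 2 u _ hpar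
          rw [hz, mul_zero]
    have hh0 := hLHS _ _ hstruct f hf hf' ({d u} : Set ℝ) hσ hg0
    have := (WSaux.inner_E_eq_zero_iff d hstruct hσ
      (⟨fun v => ((d v : ℝ) : ℂ) * (f : V → ℂ) v, hf'⟩ : lp (fun _ : V => ℂ) 2)).mp hh0 u rfl
    have hfu : (f : V → ℂ) u = 1 := lp.single_apply_self 2 u 1
    rw [show ((⟨fun v => ((d v : ℝ) : ℂ) * (f : V → ℂ) v, hf'⟩ :
        lp (fun _ : V => ℂ) 2) : V → ℂ) u = ((d u : ℝ) : ℂ) * (f : V → ℂ) u from rfl,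
      hfu, mul_one] at this
    exact hu (Complex.ofReal_eq_zero.mp this)
  · -- backward direction
    intro hRHS E μ hstruct f hf hf' σ hσ hg0
    have hvanish := (WSaux.inner_E_eq_zero_iff d hstruct hσ
      (⟨shiftFun T lam (fun v => (f : V → ℂ) v), hf⟩ : lp (fun _ : V => ℂ) 2)).mp hg0
    refine (WSaux.inner_E_eq_zero_iff d hstruct hσ
      (⟨fun v => ((d v : ℝ) : ℂ) * (f : V → ℂ) v, hf'⟩ : lp (fun _ : V => ℂ) 2)).mpr
      fun v hv => ?_
    show ((d v : ℝ) : ℂ) * (f : V → ℂ) v = 0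
    by_cases hzero : d v = 0
    · rw [hzero]; simp
    · obtain ⟨w, hwroot, hwpar, hwlam, hwd⟩ := hRHS v hzero
      have hw : d w ∈ σ := by rw [hwd]; exact hv
      have hgw := hvanish w hw
      have hgw' : shiftFun T lam (fun v => (f : V → ℂ) v) w = 0 := hgw
      rw [shiftFun, if_neg hwroot, hwpar] at hgw'
      rcases mul_eq_zero.mp hgw' with hc | hc
      · exact absurd hc hwlam
      · rw [hc, mul_zero]
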